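/- arXiv:1804.00552 — 3 statements merged into one kernel-verified Lean document; each statement's English description precedes it below -/
import Mathlib

section
/- Fix d ∈ ℕ with d ≥ 1 and k₀ > 0, and let f : ℝ^d → ℂ be a Schwartz function. Define E : ℝ^d × (0, ∞) → ℂ by E(x, z) = ∫_{ℝ^d} (k₀ / (2 i π z))^{d/2} · exp( i k₀ |x − y|² / (2 z) ) · f(y) dy, where the complex power is taken with the principal branch. Then for every x ∈ ℝ^d and z > 0, E satisfies the homogeneous paraxial (Schrödinger) equation 2 i k₀ ∂E/∂z (x, z) + Δₓ E(x, z) = 0, where Δₓ denotes the Laplacian with respect to x. -/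
open MeasureTheory Complex SchwartzMap
open scoped Real BigOperators

set_option maxHeartbeats 1000000

lemma hasDeriv_c (d : ℕ) (k₀ z : ℝ) (hk : 0 < k₀) (hz : 0 < z) :
    HasDerivAt (fun s : ℝ => ((k₀:ℂ)/(2*Complex.I*(π:ℂ)*(s:ℂ)))^((d:ℂ)/2))
      (-(d:ℂ)/(2*(z:ℂ)) * ((k₀:ℂ)/(2*Complex.I*(π:ℂ)*(z:ℂ)))^((d:ℂ)/2)) z := by
  have hπ : (π:ℂ) ≠ 0 := Complex.ofReal_ne_zero.2 Real.pi_ne_zero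
  have hz' : (z:ℂ) ≠ 0 := Complex.ofReal_ne_zero.2 hz.ne'
  have hk' : (k₀:ℂ) ≠ 0 := Complex.ofReal_ne_zero.2 hk.ne'
  have hne : 2*Complex.I*(π:ℂ)*(z:ℂ) ≠ 0 := by
    simp [Complex.I_ne_zero, hπ, hz']
  have hb : (k₀:ℂ)/(2*Complex.I*(π:ℂ)*(z:ℂ)) ≠ 0 := div_ne_zero hk' hne
  -- base value in slit plane
  have hbz : (k₀:ℂ)/(2*Complex.I*(π:ℂ)*(z:ℂ)) = ((-(k₀/(2*π*z)) : ℝ):ℂ) * Complex.I := by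
    have h2 : (2*(π:ℂ)*(z:ℂ)) ≠ 0 := by simp [hπ, hz']
    field_simp
    ring_nf
    simp [Complex.I_sq]
    field_simp
  have hslit : (k₀:ℂ)/(2*Complex.I*(π:ℂ)*(z:ℂ)) ∈ Complex.slitPlane := by
    rw [hbz, Complex.mem_slitPlane_iff]
    right
    simp only [Complex.mul_im, Complex.ofReal_re, Complex.I_im, Complex.ofReal_im,
      Complex.I_re, mul_zero, mul_one, zero_mul, add_zero]
    have : 0 < k₀/(2*π*z) := by positivity
    intro h; rw [neg_eq_zero] at h; exact this.ne' h
  -- complex derivative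
  have h1 : HasDerivAt (fun w : ℂ => (k₀:ℂ)/(2*Complex.I*(π:ℂ)*w))
      ((k₀:ℂ) * (-(2*Complex.I*(π:ℂ)) / (2*Complex.I*(π:ℂ)*(z:ℂ))^2)) (z:ℂ) := by
    have h0 : HasDerivAt (fun w : ℂ => 2*Complex.I*(π:ℂ)*w) (2*Complex.I*(π:ℂ)) (z:ℂ) := by
      simpa using (hasDerivAt_id (z:ℂ)).const_mul (2*Complex.I*(π:ℂ))
    have := (h0.inv hne).const_mul (k₀:ℂ)
    simpa [div_eq_mul_inv] using this
  have h2 := (h1.cpow_const (c := (d:ℂ)/2) hslit).comp_ofReal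
  convert h2 using 1
  rw [Complex.cpow_sub _ _ hb, Complex.cpow_one]
  field_simp


lemma hasDeriv_ker_z (k₀ R z : ℝ) (hz : z ≠ 0) :
    HasDerivAt (fun s : ℝ => Complex.exp (Complex.I*(k₀:ℂ)*(R:ℂ)/(2*(s:ℂ))))
      (-(Complex.I*(k₀:ℂ)*(R:ℂ))/(2*(z:ℂ)^2) * Complex.exp (Complex.I*(k₀:ℂ)*(R:ℂ)/(2*(z:ℂ)))) z := by
  have hz' : (z:ℂ) ≠ 0 := Complex.ofReal_ne_zero.2 hz
  have hne : (2*(z:ℂ)) ≠ 0 := by simp [hz']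
  have h0 : HasDerivAt (fun w : ℂ => 2*w) (2:ℂ) (z:ℂ) := by
    simpa using (hasDerivAt_id (z:ℂ)).const_mul (2:ℂ)
  have h1 := ((h0.inv hne).const_mul (Complex.I*(k₀:ℂ)*(R:ℂ))).cexp.comp_ofReal
  simp only [Pi.inv_apply] at h1
  convert h1 using 1
  field_simp
  ring

lemma hasDeriv_quad (c B : ℂ) (u : ℝ) (t : ℝ) :
    HasDerivAt (fun t : ℝ => Complex.exp (c * (((t:ℂ) - (u:ℂ))^2 + B)))
      (Complex.exp (c * (((t:ℂ) - (u:ℂ))^2 + B)) * (c * (2*((t:ℂ) - (u:ℂ))))) t := by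
  have h0 : HasDerivAt (fun w : ℂ => c * ((w - (u:ℂ))^2 + B)) (c * (2*((t:ℂ) - (u:ℂ)))) (t:ℂ) := by
    have h1 : HasDerivAt (fun w : ℂ => w - (u:ℂ)) 1 (t:ℂ) := (hasDerivAt_id _).sub_const _
    have h2 := ((h1.pow 2).add_const B).const_mul c
    refine h2.congr_deriv ?_
    simp
  exact h0.cexp.comp_ofReal

lemma abs_ker (k₀ R s : ℝ) :
    ‖(Complex.exp (Complex.I*(k₀:ℂ)*(R:ℂ)/(2*(s:ℂ))))‖ = 1 := by
  rw [Complex.norm_exp]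
  have : (Complex.I*(k₀:ℂ)*(R:ℂ)/(2*(s:ℂ))).re = 0 := by
    simp [Complex.div_re, Complex.mul_re, Complex.mul_im]
  rw [this, Real.exp_zero]

lemma abs_c (d : ℕ) (k₀ s : ℝ) (hk : 0 < k₀) (hs : 0 < s) :
    ‖(((k₀:ℂ)/(2*Complex.I*(π:ℂ)*(s:ℂ)))^((d:ℂ)/2))‖ = (k₀/(2*π*s)) ^ ((d:ℝ)/2) := by
  have hb : (k₀:ℂ)/(2*Complex.I*(π:ℂ)*(s:ℂ)) ≠ 0 := by
    apply div_ne_zero (Complex.ofReal_ne_zero.2 hk.ne')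
    simp [Complex.I_ne_zero, Complex.ofReal_ne_zero.2 Real.pi_ne_zero,
      Complex.ofReal_ne_zero.2 hs.ne']
  rw [Complex.norm_cpow_of_ne_zero hb]
  have him : ((d:ℂ)/2).im = 0 := by simp
  have hre : ((d:ℂ)/2).re = (d:ℝ)/2 := by simp
  rw [him, hre, mul_zero, Real.exp_zero, div_one]
  congr 1
  rw [norm_div]
  simp [Complex.norm_real, abs_of_pos hk, abs_of_pos hs, abs_of_pos Real.pi_pos,
    mul_comm, mul_assoc]

lemma update_sum (d : ℕ) (x y : Fin d → ℝ) (i : Fin d) (t : ℝ) :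
    (∑ j, (Function.update x i t j - y j)^2)
      = (t - y i)^2 + ∑ j ∈ Finset.univ \ {i}, (x j - y j)^2 := by
  have h : (fun j => (Function.update x i t j - y j)^2)
      = Function.update (fun j => (x j - y j)^2) i ((t - y i)^2) := by
    funext j
    by_cases h : j = i
    · subst h; simp
    · simp [Function.update_of_ne h]
  rw [h, Finset.sum_update_of_mem (Finset.mem_univ i)]

lemma int_bound (d : ℕ) (f : SchwartzMap ((Fin d) → ℝ) ℂ) (M : ℝ) :
    Integrable (fun y : Fin d → ℝ => M * ((1+‖y‖)^2 * ‖f y‖)) := by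
  have h0 : Integrable (fun y : Fin d → ℝ => ‖f y‖) := f.integrable.norm
  have h1 := f.integrable_pow_mul volume 1
  have h2 := f.integrable_pow_mul volume 2
  have h := (((h0.add (h1.const_mul 2)).add h2).const_mul M)
  have he : (fun y : Fin d → ℝ => M * ((1+‖y‖)^2 * ‖f y‖))
      = fun y => M * ((‖f y‖ + 2*(‖y‖^1*‖f y‖)) + ‖y‖^2*‖f y‖) := by
    funext y; ring
  rw [he]; exact h

lemma R_le (d : ℕ) (x y : Fin d → ℝ) :
    (∑ i, (x i - y i)^2) ≤ d * ((1+‖x‖)^2 * (1+‖y‖)^2) := by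
  have h1 : ∀ i, (x i - y i)^2 ≤ (1+‖x‖)^2 * (1+‖y‖)^2 := by
    intro i
    have hx : |x i| ≤ ‖x‖ := by
      simpa using norm_le_pi_norm x i
    have hy : |y i| ≤ ‖y‖ := by
      simpa using norm_le_pi_norm y i
    have hxn : (0:ℝ) ≤ ‖x‖ := norm_nonneg _
    have hyn : (0:ℝ) ≤ ‖y‖ := norm_nonneg _
    have h2 : |x i - y i| ≤ (1+‖x‖)*(1+‖y‖) := by
      calc |x i - y i| ≤ |x i| + |y i| := abs_sub _ _
        _ ≤ ‖x‖ + ‖y‖ := add_le_add hx hy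
        _ ≤ (1+‖x‖)*(1+‖y‖) := by nlinarith
    calc (x i - y i)^2 = |x i - y i|^2 := (_root_.sq_abs _).symm
      _ ≤ ((1+‖x‖)*(1+‖y‖))^2 := by
          apply pow_le_pow_left₀ (abs_nonneg _) h2
      _ = (1+‖x‖)^2 * (1+‖y‖)^2 := by ring
  calc (∑ i, (x i - y i)^2) ≤ ∑ _i : Fin d, (1+‖x‖)^2 * (1+‖y‖)^2 :=
        Finset.sum_le_sum (fun i _ => h1 i)
    _ = d * ((1+‖x‖)^2 * (1+‖y‖)^2) := by simp [Finset.sum_const, mul_comm]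

lemma cont_ker (d : ℕ) (k₀ z : ℝ) (x : Fin d → ℝ) :
    Continuous (fun y : Fin d → ℝ =>
      Complex.exp (Complex.I*(k₀:ℂ)*((∑ i, (x i - y i)^2 : ℝ):ℂ)/(2*(z:ℂ)))) := by
  apply Continuous.cexp
  apply Continuous.div_const
  apply Continuous.mul continuous_const
  exact Complex.continuous_ofReal.comp (by continuity)


section
variable (d : ℕ) (k₀ : ℝ)

lemma int_ker_f (f : SchwartzMap ((Fin d) → ℝ) ℂ) (z : ℝ) (x : Fin d → ℝ) (c : ℂ) :
    Integrable (fun y : Fin d → ℝ =>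
      c * Complex.exp (Complex.I*(k₀:ℂ)*((∑ i, (x i - y i)^2 : ℝ):ℂ)/(2*(z:ℂ))) * f y) := by
  refine ((f.integrable.norm).const_mul ‖c‖).mono'
    ((((continuous_const.mul (cont_ker d k₀ z x)).mul f.continuous)).aestronglyMeasurable)
    (Filter.Eventually.of_forall fun y => ?_)
  rw [norm_mul, norm_mul, abs_ker, mul_one]

lemma Dz (hk : 0 < k₀) (f : SchwartzMap ((Fin d) → ℝ) ℂ)
    (x : Fin d → ℝ) (z : ℝ) (hz : 0 < z) :
    Integrable (fun y : Fin d → ℝ =>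
      (-(d:ℂ)/(2*(z:ℂ)) - Complex.I*(k₀:ℂ)*((∑ i, (x i - y i)^2 : ℝ):ℂ)/(2*(z:ℂ)^2)) *
        (((k₀:ℂ)/(2*Complex.I*(π:ℂ)*(z:ℂ)))^((d:ℂ)/2) *
          Complex.exp (Complex.I*(k₀:ℂ)*((∑ i, (x i - y i)^2 : ℝ):ℂ)/(2*(z:ℂ))) * f y)) ∧
    HasDerivAt (fun s : ℝ => ∫ y : Fin d → ℝ,
        ((k₀:ℂ)/(2*Complex.I*(π:ℂ)*(s:ℂ)))^((d:ℂ)/2) *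
          Complex.exp (Complex.I*(k₀:ℂ)*((∑ i, (x i - y i)^2 : ℝ):ℂ)/(2*(s:ℂ))) * f y)
      (∫ y : Fin d → ℝ,
        (-(d:ℂ)/(2*(z:ℂ)) - Complex.I*(k₀:ℂ)*((∑ i, (x i - y i)^2 : ℝ):ℂ)/(2*(z:ℂ)^2)) *
          (((k₀:ℂ)/(2*Complex.I*(π:ℂ)*(z:ℂ)))^((d:ℂ)/2) *
            Complex.exp (Complex.I*(k₀:ℂ)*((∑ i, (x i - y i)^2 : ℝ):ℂ)/(2*(z:ℂ))) * f y)) z := by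
  set Mc := (k₀/(π*z)) ^ ((d:ℝ)/2) with hMc
  set M := Mc * ((d:ℝ)/z + 2*k₀*(d:ℝ)*(1+‖x‖)^2/z^2) with hM
  refine hasDerivAt_integral_of_dominated_loc_of_deriv_le (s := Metric.ball z (z/2))
      (F' := fun (s : ℝ) (y : Fin d → ℝ) =>
        (-(d:ℂ)/(2*(s:ℂ)) - Complex.I*(k₀:ℂ)*((∑ i, (x i - y i)^2 : ℝ):ℂ)/(2*(s:ℂ)^2)) *
          (((k₀:ℂ)/(2*Complex.I*(π:ℂ)*(s:ℂ)))^((d:ℂ)/2) *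
            Complex.exp (Complex.I*(k₀:ℂ)*((∑ i, (x i - y i)^2 : ℝ):ℂ)/(2*(s:ℂ))) * f y))
      (bound := fun y => M * ((1+‖y‖)^2 * ‖f y‖))
      (Metric.ball_mem_nhds _ (by positivity)) ?_ ?_ ?_ ?_ ?_ ?_
  · exact Filter.Eventually.of_forall fun s =>
      (int_ker_f d k₀ f s x _).aestronglyMeasurable
  · exact int_ker_f d k₀ f z x _
  · apply Continuous.aestronglyMeasurable
    apply Continuous.mul
    · apply Continuous.sub continuous_const
      apply Continuous.div_const
      exact (continuous_const.mul (Complex.continuous_ofReal.comp (by continuity)))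
    · exact (continuous_const.mul (cont_ker d k₀ z x)).mul f.continuous
  · refine Filter.Eventually.of_forall fun y => fun s hs => ?_
    have hs2 : z/2 < s := by
      have h := Metric.mem_ball.mp hs
      rw [Real.dist_eq] at h
      have := abs_sub_lt_iff.mp h
      linarith [this.2]
    have hs0 : 0 < s := by linarith
    have hR0 : 0 ≤ (∑ i, (x i - y i)^2) := by positivity
    have hRle := R_le d x y
    set R := (∑ i, (x i - y i)^2) with hRdef
    have hK : ‖Complex.exp (Complex.I*(k₀:ℂ)*(R:ℂ)/(2*(s:ℂ)))‖ = 1 := by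
      exact abs_ker k₀ R s
    have hC : ‖((k₀:ℂ)/(2*Complex.I*(π:ℂ)*(s:ℂ)))^((d:ℂ)/2)‖ ≤ Mc := by
      rw [abs_c d k₀ s hk hs0, hMc]
      apply Real.rpow_le_rpow (by positivity) ?_ (by positivity)
      rw [div_le_div_iff₀ (by positivity) (by positivity)]
      nlinarith [mul_nonneg (mul_nonneg hk.le Real.pi_pos.le) (by linarith : (0:ℝ) ≤ 2*s - z)]
    have hcoef : ‖(-(d:ℂ)/(2*(s:ℂ)) - Complex.I*(k₀:ℂ)*(R:ℂ)/(2*(s:ℂ)^2))‖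
        ≤ (d:ℝ)/z + 2*k₀*((d:ℝ)*((1+‖x‖)^2*(1+‖y‖)^2))/z^2 := by
      have h1 : ‖(-(d:ℂ)/(2*(s:ℂ)))‖ = (d:ℝ)/(2*s) := by
        rw [norm_div]
        simp [map_mul, Complex.norm_real, Complex.norm_natCast,
          abs_of_pos hs0]
      have h2 : ‖Complex.I*(k₀:ℂ)*(R:ℂ)/(2*(s:ℂ)^2)‖ = k₀*R/(2*s^2) := by
        rw [norm_div]
        simp [map_mul, Complex.norm_real, Complex.norm_I,
          abs_of_pos hk, _root_.abs_of_nonneg hR0, abs_of_pos hs0, map_pow]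
      refine (norm_sub_le _ _).trans ?_
      rw [h1, h2]
      have e1 : (d:ℝ)/(2*s) ≤ (d:ℝ)/z := by
        apply div_le_div_of_nonneg_left ?_ hz (by linarith)
        · positivity
      have e2 : k₀*R/(2*s^2) ≤ 2*k₀*((d:ℝ)*((1+‖x‖)^2*(1+‖y‖)^2))/z^2 := by
        rw [div_le_div_iff₀ (by positivity) (by positivity)]
        have hz2 : z^2 ≤ 4*s^2 := by nlinarith
        have h3 : R * z^2 ≤ ((d:ℝ)*((1+‖x‖)^2*(1+‖y‖)^2)) * (4*s^2) :=
          mul_le_mul hRle hz2 (by positivity) (by positivity)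
        nlinarith [mul_le_mul_of_nonneg_left h3 hk.le]
      linarith
    calc ‖(-(d:ℂ)/(2*(s:ℂ)) - Complex.I*(k₀:ℂ)*(R:ℂ)/(2*(s:ℂ)^2)) *
          (((k₀:ℂ)/(2*Complex.I*(π:ℂ)*(s:ℂ)))^((d:ℂ)/2) *
            Complex.exp (Complex.I*(k₀:ℂ)*(R:ℂ)/(2*(s:ℂ))) * f y)‖
        = ‖(-(d:ℂ)/(2*(s:ℂ)) - Complex.I*(k₀:ℂ)*(R:ℂ)/(2*(s:ℂ)^2))‖ *
          (‖((k₀:ℂ)/(2*Complex.I*(π:ℂ)*(s:ℂ)))^((d:ℂ)/2)‖ * ‖f y‖) := by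
          rw [norm_mul, norm_mul, norm_mul, hK, mul_one]
      _ ≤ ((d:ℝ)/z + 2*k₀*((d:ℝ)*((1+‖x‖)^2*(1+‖y‖)^2))/z^2) * (Mc * ‖f y‖) := by
          apply mul_le_mul hcoef ?_ (by positivity) (by positivity)
          exact mul_le_mul_of_nonneg_right hC (norm_nonneg _)
      _ ≤ M * ((1+‖y‖)^2 * ‖f y‖) := by
          rw [hM]
          have hf0 : (0:ℝ) ≤ ‖f y‖ := norm_nonneg _
          have hy1 : (1:ℝ) ≤ (1+‖y‖)^2 := by nlinarith [norm_nonneg y]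
          have hMc0 : (0:ℝ) ≤ Mc := by rw [hMc]; positivity
          have hx0 : (0:ℝ) ≤ (1+‖x‖)^2 := by positivity
          have h1 : (0:ℝ) ≤ (d:ℝ)/z := by positivity
          have h2 : (0:ℝ) ≤ 2*k₀*(d:ℝ)*(1+‖x‖)^2/z^2 := by positivity
          have hkey : Mc * ((d:ℝ)/z + 2*k₀*(d:ℝ)*(1+‖x‖)^2/z^2) * ((1+‖y‖)^2*‖f y‖)
              - ((d:ℝ)/z + 2*k₀*((d:ℝ)*((1+‖x‖)^2*(1+‖y‖)^2))/z^2) * (Mc*‖f y‖)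
              = Mc*((d:ℝ)/z)*‖f y‖*((1+‖y‖)^2 - 1) := by ring
          linarith [mul_nonneg (mul_nonneg (mul_nonneg hMc0 h1) hf0)
            (by linarith : (0:ℝ) ≤ (1+‖y‖)^2 - 1)]
  · exact int_bound d f M
  · refine Filter.Eventually.of_forall fun y => fun s hs => ?_
    have hs2 : z/2 < s := by
      have h := Metric.mem_ball.mp hs
      rw [Real.dist_eq] at h
      have := abs_sub_lt_iff.mp h
      linarith [this.2]
    have hs0 : 0 < s := by linarith
    have h1 := ((hasDeriv_c d k₀ s hk hs0).mul
      (hasDeriv_ker_z k₀ (∑ i, (x i - y i)^2) s hs0.ne')).mul_const (f y)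
    refine h1.congr_deriv ?_
    ring

end


section
variable (d : ℕ) (k₀ : ℝ)

lemma ker_update_eq (x y : Fin d → ℝ) (i : Fin d) (z t : ℝ) :
    Complex.exp (Complex.I*(k₀:ℂ)*((∑ j, (Function.update x i t j - y j)^2 : ℝ):ℂ)/(2*(z:ℂ)))
      = Complex.exp ((Complex.I*(k₀:ℂ)/(2*(z:ℂ))) *
          (((t:ℂ) - ((y i : ℝ):ℂ))^2 + ((∑ j ∈ Finset.univ \ {i}, (x j - y j)^2 : ℝ):ℂ))) := by
  rw [update_sum]
  congr 1
  push_cast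
  ring

-- first derivative in direction i
lemma Dx1 (hk : 0 < k₀) (f : SchwartzMap ((Fin d) → ℝ) ℂ)
    (x : Fin d → ℝ) (z : ℝ) (hz : 0 < z) (i : Fin d) (t₀ : ℝ) :
    Integrable (fun y : Fin d → ℝ =>
      (Complex.I*(k₀:ℂ)*((t₀:ℂ) - ((y i : ℝ):ℂ))/(z:ℂ)) *
        (Complex.exp (Complex.I*(k₀:ℂ)*((∑ j, (Function.update x i t₀ j - y j)^2 : ℝ):ℂ)/(2*(z:ℂ))) * f y)) ∧
    HasDerivAt (fun t : ℝ => ∫ y : Fin d → ℝ,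
        Complex.exp (Complex.I*(k₀:ℂ)*((∑ j, (Function.update x i t j - y j)^2 : ℝ):ℂ)/(2*(z:ℂ))) * f y)
      (∫ y : Fin d → ℝ,
        (Complex.I*(k₀:ℂ)*((t₀:ℂ) - ((y i : ℝ):ℂ))/(z:ℂ)) *
          (Complex.exp (Complex.I*(k₀:ℂ)*((∑ j, (Function.update x i t₀ j - y j)^2 : ℝ):ℂ)/(2*(z:ℂ))) * f y)) t₀ := by
  set M := (k₀/z) * (|t₀|+2) with hM
  refine hasDerivAt_integral_of_dominated_loc_of_deriv_le (s := Metric.ball t₀ 1)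
      (F' := fun (t : ℝ) (y : Fin d → ℝ) =>
        (Complex.I*(k₀:ℂ)*((t:ℂ) - ((y i : ℝ):ℂ))/(z:ℂ)) *
          (Complex.exp (Complex.I*(k₀:ℂ)*((∑ j, (Function.update x i t j - y j)^2 : ℝ):ℂ)/(2*(z:ℂ))) * f y))
      (bound := fun y => M * ((1+‖y‖)^2 * ‖f y‖))
      (Metric.ball_mem_nhds _ one_pos) ?_ ?_ ?_ ?_ ?_ ?_
  · refine Filter.Eventually.of_forall fun t => Continuous.aestronglyMeasurable ?_
    exact (cont_ker d k₀ z (Function.update x i t)).mul f.continuous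
  · refine ((f.integrable.norm).mono'
      (((cont_ker d k₀ z (Function.update x i t₀)).mul f.continuous).aestronglyMeasurable)
      (Filter.Eventually.of_forall fun y => ?_))
    rw [norm_mul, abs_ker, one_mul]
  · apply Continuous.aestronglyMeasurable
    refine Continuous.mul ?_ ((cont_ker d k₀ z (Function.update x i t₀)).mul f.continuous)
    apply Continuous.div_const
    exact continuous_const.mul (continuous_const.sub
      (Complex.continuous_ofReal.comp (continuous_apply i)))
  · refine Filter.Eventually.of_forall fun y => fun t ht => ?_
    have htb : |t - t₀| < 1 := by
      have h := Metric.mem_ball.mp ht; rwa [Real.dist_eq] at h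
    have ht1 : |t| ≤ |t₀| + 1 := by
      have := abs_sub_lt_iff.mp htb
      cases' abs_le.mp (le_refl |t₀|) with _ _
      rw [abs_le]
      constructor <;> cases' abs_le.mp (le_refl |t|) with _ _ <;>
        [skip; skip] <;> nlinarith [abs_nonneg t₀, le_abs_self t₀, neg_abs_le t₀,
          le_abs_self t, neg_abs_le t]
    have hyi : |y i| ≤ ‖y‖ := by simpa using norm_le_pi_norm y i
    have hyn : (0:ℝ) ≤ ‖y‖ := norm_nonneg _
    have key : |t - y i| ≤ (|t₀|+2) * (1+‖y‖) := by
      have h1 : |t - y i| ≤ |t| + |y i| := abs_sub _ _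
      nlinarith [abs_nonneg t₀]
    have hf0 : (0:ℝ) ≤ ‖f y‖ := norm_nonneg _
    have hcoef : ‖Complex.I*(k₀:ℂ)*((t:ℂ) - ((y i : ℝ):ℂ))/(z:ℂ)‖ = k₀*|t - y i|/z := by
      rw [norm_div]
      simp [map_mul, Complex.norm_I, ← Complex.ofReal_sub,
        Complex.norm_real, abs_of_pos hk, abs_of_pos hz]
    rw [norm_mul, norm_mul, abs_ker, one_mul, hcoef, hM]
    have h2 : k₀*|t - y i|/z * ‖f y‖ ≤ (k₀/z) * ((|t₀|+2)*(1+‖y‖)) * ‖f y‖ := by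
      have := mul_le_mul_of_nonneg_right key hf0
      have hkz : (0:ℝ) ≤ k₀/z := by positivity
      calc k₀*|t - y i|/z * ‖f y‖ = (k₀/z) * (|t - y i| * ‖f y‖) := by ring
        _ ≤ (k₀/z) * ((|t₀|+2)*(1+‖y‖) * ‖f y‖) := by
            exact mul_le_mul_of_nonneg_left this hkz
        _ = (k₀/z) * ((|t₀|+2)*(1+‖y‖)) * ‖f y‖ := by ring
    refine h2.trans ?_
    have hkz : (0:ℝ) ≤ k₀/z := by positivity
    have ht2 : (0:ℝ) ≤ |t₀|+2 := by positivity
    nlinarith [mul_nonneg (mul_nonneg hkz ht2) (mul_nonneg hyn hf0),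
      mul_nonneg (mul_nonneg hkz ht2) (mul_nonneg (mul_nonneg hyn hyn) hf0)]
  · exact int_bound d f M
  · refine Filter.Eventually.of_forall fun y => fun t ht => ?_
    simp_rw [ker_update_eq d k₀ x y i z]
    have h := (hasDeriv_quad (Complex.I*(k₀:ℂ)/(2*(z:ℂ)))
      ((∑ j ∈ Finset.univ \ {i}, (x j - y j)^2 : ℝ):ℂ) (y i) t).mul_const (f y)
    refine h.congr_deriv ?_
    have hz' : (z:ℂ) ≠ 0 := Complex.ofReal_ne_zero.2 hz.ne'
    field_simp

lemma Dx2 (hk : 0 < k₀) (f : SchwartzMap ((Fin d) → ℝ) ℂ)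
    (x : Fin d → ℝ) (z : ℝ) (hz : 0 < z) (i : Fin d) (t₀ : ℝ) :
    Integrable (fun y : Fin d → ℝ =>
      ((Complex.I*(k₀:ℂ)/(z:ℂ)) + (Complex.I*(k₀:ℂ)*((t₀:ℂ) - ((y i : ℝ):ℂ))/(z:ℂ))^2) *
        (Complex.exp (Complex.I*(k₀:ℂ)*((∑ j, (Function.update x i t₀ j - y j)^2 : ℝ):ℂ)/(2*(z:ℂ))) * f y)) ∧
    HasDerivAt (fun t : ℝ => ∫ y : Fin d → ℝ,
        (Complex.I*(k₀:ℂ)*((t:ℂ) - ((y i : ℝ):ℂ))/(z:ℂ)) *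
          (Complex.exp (Complex.I*(k₀:ℂ)*((∑ j, (Function.update x i t j - y j)^2 : ℝ):ℂ)/(2*(z:ℂ))) * f y))
      (∫ y : Fin d → ℝ,
        ((Complex.I*(k₀:ℂ)/(z:ℂ)) + (Complex.I*(k₀:ℂ)*((t₀:ℂ) - ((y i : ℝ):ℂ))/(z:ℂ))^2) *
          (Complex.exp (Complex.I*(k₀:ℂ)*((∑ j, (Function.update x i t₀ j - y j)^2 : ℝ):ℂ)/(2*(z:ℂ))) * f y)) t₀ := by
  set M := k₀/z + (k₀/z)^2 * (|t₀|+2)^2 with hM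
  refine hasDerivAt_integral_of_dominated_loc_of_deriv_le (s := Metric.ball t₀ 1)
      (F' := fun (t : ℝ) (y : Fin d → ℝ) =>
        ((Complex.I*(k₀:ℂ)/(z:ℂ)) + (Complex.I*(k₀:ℂ)*((t:ℂ) - ((y i : ℝ):ℂ))/(z:ℂ))^2) *
          (Complex.exp (Complex.I*(k₀:ℂ)*((∑ j, (Function.update x i t j - y j)^2 : ℝ):ℂ)/(2*(z:ℂ))) * f y))
      (bound := fun y => M * ((1+‖y‖)^2 * ‖f y‖))
      (Metric.ball_mem_nhds _ one_pos) ?_ ?_ ?_ ?_ ?_ ?_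
  · refine Filter.Eventually.of_forall fun t => Continuous.aestronglyMeasurable ?_
    refine Continuous.mul ?_ ((cont_ker d k₀ z (Function.update x i t)).mul f.continuous)
    apply Continuous.div_const
    exact continuous_const.mul (continuous_const.sub
      (Complex.continuous_ofReal.comp (continuous_apply i)))
  · -- integrability of F t₀ : this is Dx1's integrable part
    exact (Dx1 d k₀ hk f x z hz i t₀).1
  · apply Continuous.aestronglyMeasurable
    refine Continuous.mul ?_ ((cont_ker d k₀ z (Function.update x i t₀)).mul f.continuous)
    refine continuous_const.add ?_
    refine Continuous.pow ?_ 2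
    apply Continuous.div_const
    exact continuous_const.mul (continuous_const.sub
      (Complex.continuous_ofReal.comp (continuous_apply i)))
  · refine Filter.Eventually.of_forall fun y => fun t ht => ?_
    have htb : |t - t₀| < 1 := by
      have h := Metric.mem_ball.mp ht; rwa [Real.dist_eq] at h
    have ht1 : |t| ≤ |t₀| + 1 := by
      have h := abs_sub_lt_iff.mp htb
      rw [abs_le]
      constructor <;> nlinarith [le_abs_self t₀, neg_abs_le t₀, le_abs_self t, neg_abs_le t]
    have hyi : |y i| ≤ ‖y‖ := by simpa using norm_le_pi_norm y i
    have hyn : (0:ℝ) ≤ ‖y‖ := norm_nonneg _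
    have key : |t - y i| ≤ (|t₀|+2) * (1+‖y‖) := by
      have h1 : |t - y i| ≤ |t| + |y i| := abs_sub _ _
      nlinarith [abs_nonneg t₀]
    have hf0 : (0:ℝ) ≤ ‖f y‖ := norm_nonneg _
    have hcoef1 : ‖Complex.I*(k₀:ℂ)*((t:ℂ) - ((y i : ℝ):ℂ))/(z:ℂ)‖ = k₀*|t - y i|/z := by
      rw [norm_div]
      simp [map_mul, Complex.norm_I, ← Complex.ofReal_sub,
        Complex.norm_real, abs_of_pos hk, abs_of_pos hz]
    have hcoef0 : ‖Complex.I*(k₀:ℂ)/(z:ℂ)‖ = k₀/z := by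
      rw [norm_div]
      simp [map_mul, Complex.norm_I, Complex.norm_real,
        abs_of_pos hk, abs_of_pos hz]
    rw [norm_mul, norm_mul, abs_ker, one_mul]
    have hcoef : ‖(Complex.I*(k₀:ℂ)/(z:ℂ)) + (Complex.I*(k₀:ℂ)*((t:ℂ) - ((y i : ℝ):ℂ))/(z:ℂ))^2‖
        ≤ k₀/z + (k₀*|t - y i|/z)^2 := by
      refine (norm_add_le _ _).trans ?_
      rw [norm_pow, hcoef0, hcoef1]
    have hb2 : (k₀*|t - y i|/z)^2 ≤ (k₀/z)^2 * ((|t₀|+2) * (1+‖y‖))^2 := by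
      have h0 : (0:ℝ) ≤ k₀*|t - y i|/z := by positivity
      have := mul_le_mul key key (abs_nonneg _) (by positivity)
      calc (k₀*|t - y i|/z)^2 = (k₀/z)^2 * |t - y i|^2 := by ring
        _ ≤ (k₀/z)^2 * ((|t₀|+2) * (1+‖y‖))^2 := by
            apply mul_le_mul_of_nonneg_left ?_ (by positivity)
            calc |t - y i|^2 = |t - y i| * |t - y i| := sq (|t - y i|) ▸ by ring
              _ ≤ ((|t₀|+2) * (1+‖y‖)) * ((|t₀|+2) * (1+‖y‖)) := this
              _ = ((|t₀|+2) * (1+‖y‖))^2 := by ring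
    have hfin : (k₀/z + (k₀/z)^2 * ((|t₀|+2) * (1+‖y‖))^2) * ‖f y‖
        ≤ M * ((1+‖y‖)^2 * ‖f y‖) := by
      rw [hM]
      have h1 : (1:ℝ) ≤ (1+‖y‖)^2 := by nlinarith
      have hkz : (0:ℝ) ≤ k₀/z := by positivity
      have hkey : (k₀/z + (k₀/z)^2*(|t₀|+2)^2) * ((1+‖y‖)^2*‖f y‖)
          - (k₀/z + (k₀/z)^2 * ((|t₀|+2) * (1+‖y‖))^2) * ‖f y‖
          = (k₀/z)*‖f y‖*((1+‖y‖)^2 - 1) := by ring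
      linarith [mul_nonneg (mul_nonneg hkz hf0) (by linarith : (0:ℝ) ≤ (1+‖y‖)^2 - 1)]
    calc ‖(Complex.I*(k₀:ℂ)/(z:ℂ)) + (Complex.I*(k₀:ℂ)*((t:ℂ) - ((y i : ℝ):ℂ))/(z:ℂ))^2‖ * ‖f y‖
        ≤ (k₀/z + (k₀*|t - y i|/z)^2) * ‖f y‖ := mul_le_mul_of_nonneg_right hcoef hf0
      _ ≤ (k₀/z + (k₀/z)^2 * ((|t₀|+2) * (1+‖y‖))^2) * ‖f y‖ := by
          apply mul_le_mul_of_nonneg_right ?_ hf0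
          linarith
      _ ≤ M * ((1+‖y‖)^2 * ‖f y‖) := hfin
  · exact int_bound d f M
  · refine Filter.Eventually.of_forall fun y => fun t ht => ?_
    simp_rw [ker_update_eq d k₀ x y i z, ← mul_assoc]
    have hz' : (z:ℂ) ≠ 0 := Complex.ofReal_ne_zero.2 hz.ne'
    have hlin : HasDerivAt (fun t : ℝ => Complex.I*(k₀:ℂ)*((t:ℂ) - ((y i : ℝ):ℂ))/(z:ℂ))
        (Complex.I*(k₀:ℂ)/(z:ℂ)) t := by
      have h0 : HasDerivAt (fun w : ℂ => Complex.I*(k₀:ℂ)*(w - ((y i : ℝ):ℂ))/(z:ℂ))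
          (Complex.I*(k₀:ℂ)/(z:ℂ)) (t:ℂ) := by
        have h1 := (((hasDerivAt_id (t:ℂ)).sub_const ((y i : ℝ):ℂ)).const_mul
          (Complex.I*(k₀:ℂ))).div_const (z:ℂ)
        simpa using h1
      exact h0.comp_ofReal
    have hexp := hasDeriv_quad (Complex.I*(k₀:ℂ)/(2*(z:ℂ)))
      ((∑ j ∈ Finset.univ \ {i}, (x j - y j)^2 : ℝ):ℂ) (y i) t
    have h := (hlin.mul hexp).mul_const (f y)
    refine h.congr_deriv ?_
    field_simp

end


/-- The field obtained by propagating a Schwartz initial field `f` with the free-space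
paraxial Green's function,
`E(x,z) = ∫ (k₀/(2iπz))^{d/2} exp(i k₀ |x−y|²/(2z)) f(y) dy`,
satisfies the homogeneous paraxial (Schrödinger) equation `2 i k₀ ∂E/∂z + Δₓ E = 0`
for `z > 0`. -/
theorem paraxial_propagated_field_solves_equation
    (d : ℕ) (hd : 1 ≤ d) (k₀ : ℝ) (hk : 0 < k₀)
    (f : SchwartzMap ((Fin d) → ℝ) ℂ)
    (E : ((Fin d) → ℝ) → ℝ → ℂ)
    (hE : ∀ (x : Fin d → ℝ) (z : ℝ), E x z =
      ∫ y : Fin d → ℝ,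
        ((k₀ : ℂ) / (2 * Complex.I * (π : ℂ) * (z : ℂ))) ^ ((d : ℂ) / 2) *
          Complex.exp (Complex.I * (k₀ : ℂ) * ((∑ i, (x i - y i) ^ 2 : ℝ) : ℂ) /
            (2 * (z : ℂ))) * f y) :
    ∀ (x : Fin d → ℝ) (z : ℝ), 0 < z →
      2 * Complex.I * (k₀ : ℂ) * deriv (fun s : ℝ => E x s) z +
        (∑ i, iteratedDeriv 2 (fun t : ℝ => E (Function.update x i t) z) (x i)) = 0 := by
  intro x z hz
  set C : ℂ := ((k₀:ℂ)/(2*Complex.I*(π:ℂ)*(z:ℂ)))^((d:ℂ)/2) with hCdef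
  have hDz := Dz d k₀ hk f x z hz
  -- the z-derivative
  have hderiv : deriv (fun s : ℝ => E x s) z
      = ∫ y : Fin d → ℝ,
        (-(d:ℂ)/(2*(z:ℂ)) - Complex.I*(k₀:ℂ)*((∑ i, (x i - y i)^2 : ℝ):ℂ)/(2*(z:ℂ)^2)) *
          (C * Complex.exp (Complex.I*(k₀:ℂ)*((∑ i, (x i - y i)^2 : ℝ):ℂ)/(2*(z:ℂ))) * f y) := by
    have he : (fun s : ℝ => E x s) = fun s : ℝ => ∫ y : Fin d → ℝ,
        ((k₀:ℂ)/(2*Complex.I*(π:ℂ)*(s:ℂ)))^((d:ℂ)/2) *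
          Complex.exp (Complex.I*(k₀:ℂ)*((∑ i, (x i - y i)^2 : ℝ):ℂ)/(2*(s:ℂ))) * f y :=
      funext fun s => hE x s
    rw [he]
    exact hDz.2.deriv
  -- the x-derivatives
  have hxi : ∀ i : Fin d, iteratedDeriv 2 (fun t : ℝ => E (Function.update x i t) z) (x i)
      = C * ∫ y : Fin d → ℝ,
          ((Complex.I*(k₀:ℂ)/(z:ℂ)) + (Complex.I*(k₀:ℂ)*(((x i):ℂ) - ((y i : ℝ):ℂ))/(z:ℂ))^2) *
            (Complex.exp (Complex.I*(k₀:ℂ)*((∑ j, (x j - y j)^2 : ℝ):ℂ)/(2*(z:ℂ))) * f y) := by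
    intro i
    have he1 : (fun t : ℝ => E (Function.update x i t) z)
        = fun t : ℝ => C * ∫ y : Fin d → ℝ,
            Complex.exp (Complex.I*(k₀:ℂ)*((∑ j, (Function.update x i t j - y j)^2 : ℝ):ℂ)/(2*(z:ℂ))) * f y := by
      funext t
      rw [hE]
      rw [show (fun y : Fin d → ℝ =>
          ((k₀:ℂ)/(2*Complex.I*(π:ℂ)*(z:ℂ)))^((d:ℂ)/2) *
            Complex.exp (Complex.I*(k₀:ℂ)*((∑ j, (Function.update x i t j - y j)^2 : ℝ):ℂ)/(2*(z:ℂ))) * f y)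
          = fun y : Fin d → ℝ =>
          ((k₀:ℂ)/(2*Complex.I*(π:ℂ)*(z:ℂ)))^((d:ℂ)/2) *
            (Complex.exp (Complex.I*(k₀:ℂ)*((∑ j, (Function.update x i t j - y j)^2 : ℝ):ℂ)/(2*(z:ℂ))) * f y)
          from funext fun y => mul_assoc _ _ _, integral_const_mul]
    have hd1 : ∀ t : ℝ, HasDerivAt (fun t : ℝ => E (Function.update x i t) z)
        (C * ∫ y : Fin d → ℝ,
          (Complex.I*(k₀:ℂ)*((t:ℂ) - ((y i : ℝ):ℂ))/(z:ℂ)) *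
            (Complex.exp (Complex.I*(k₀:ℂ)*((∑ j, (Function.update x i t j - y j)^2 : ℝ):ℂ)/(2*(z:ℂ))) * f y)) t := by
      intro t
      rw [he1]
      exact ((Dx1 d k₀ hk f x z hz i t).2).const_mul C
    have he2 : deriv (fun t : ℝ => E (Function.update x i t) z)
        = fun t : ℝ => C * ∫ y : Fin d → ℝ,
          (Complex.I*(k₀:ℂ)*((t:ℂ) - ((y i : ℝ):ℂ))/(z:ℂ)) *
            (Complex.exp (Complex.I*(k₀:ℂ)*((∑ j, (Function.update x i t j - y j)^2 : ℝ):ℂ)/(2*(z:ℂ))) * f y) :=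
      funext fun t => (hd1 t).deriv
    rw [show (2:ℕ) = 1 + 1 from rfl, iteratedDeriv_succ, iteratedDeriv_one, he2]
    have hd2 := ((Dx2 d k₀ hk f x z hz i (x i)).2).const_mul C
    rw [hd2.deriv]
    simp only [Function.update_eq_self]
  -- combine
  rw [hderiv, Finset.sum_congr rfl (fun i _ => hxi i)]
  have hint2 : ∀ i : Fin d, Integrable (fun y : Fin d → ℝ =>
      C * (((Complex.I*(k₀:ℂ)/(z:ℂ)) + (Complex.I*(k₀:ℂ)*(((x i):ℂ) - ((y i : ℝ):ℂ))/(z:ℂ))^2) *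
        (Complex.exp (Complex.I*(k₀:ℂ)*((∑ j, (x j - y j)^2 : ℝ):ℂ)/(2*(z:ℂ))) * f y))) := by
    intro i
    have h := (Dx2 d k₀ hk f x z hz i (x i)).1
    simp only [Function.update_eq_self] at h
    exact h.const_mul C
  have hsum : (∑ i : Fin d, C * ∫ y : Fin d → ℝ,
      ((Complex.I*(k₀:ℂ)/(z:ℂ)) + (Complex.I*(k₀:ℂ)*(((x i):ℂ) - ((y i : ℝ):ℂ))/(z:ℂ))^2) *
        (Complex.exp (Complex.I*(k₀:ℂ)*((∑ j, (x j - y j)^2 : ℝ):ℂ)/(2*(z:ℂ))) * f y))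
      = ∫ y : Fin d → ℝ, ∑ i : Fin d,
        C * (((Complex.I*(k₀:ℂ)/(z:ℂ)) + (Complex.I*(k₀:ℂ)*(((x i):ℂ) - ((y i : ℝ):ℂ))/(z:ℂ))^2) *
          (Complex.exp (Complex.I*(k₀:ℂ)*((∑ j, (x j - y j)^2 : ℝ):ℂ)/(2*(z:ℂ))) * f y)) := by
    simp_rw [← integral_const_mul]
    exact (integral_finset_sum Finset.univ (fun i _ => hint2 i)).symm
  rw [hsum, ← integral_const_mul (2*Complex.I*(k₀:ℂ)),
    ← integral_add (hDz.1.const_mul (2*Complex.I*(k₀:ℂ)))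
      (integrable_finset_sum Finset.univ (fun i _ => hint2 i))]
  have hzero : (fun y : Fin d → ℝ =>
      2*Complex.I*(k₀:ℂ) *
        ((-(d:ℂ)/(2*(z:ℂ)) - Complex.I*(k₀:ℂ)*((∑ i, (x i - y i)^2 : ℝ):ℂ)/(2*(z:ℂ)^2)) *
          (C * Complex.exp (Complex.I*(k₀:ℂ)*((∑ i, (x i - y i)^2 : ℝ):ℂ)/(2*(z:ℂ))) * f y)) +
      ∑ i : Fin d,
        C * (((Complex.I*(k₀:ℂ)/(z:ℂ)) + (Complex.I*(k₀:ℂ)*(((x i):ℂ) - ((y i : ℝ):ℂ))/(z:ℂ))^2) *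
          (Complex.exp (Complex.I*(k₀:ℂ)*((∑ j, (x j - y j)^2 : ℝ):ℂ)/(2*(z:ℂ))) * f y)))
      = fun _ => (0:ℂ) := by
    funext y
    have hcast : ((∑ i, (x i - y i)^2 : ℝ):ℂ) = ∑ i, (((x i):ℂ) - ((y i : ℝ):ℂ))^2 := by
      push_cast
      rfl
    have h1 : ∀ i : Fin d,
        C * (((Complex.I*(k₀:ℂ)/(z:ℂ)) + (Complex.I*(k₀:ℂ)*(((x i):ℂ) - ((y i : ℝ):ℂ))/(z:ℂ))^2) *
          (Complex.exp (Complex.I*(k₀:ℂ)*((∑ j, (x j - y j)^2 : ℝ):ℂ)/(2*(z:ℂ))) * f y))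
        = ((Complex.I*(k₀:ℂ)/(z:ℂ)) + (Complex.I*(k₀:ℂ)/(z:ℂ))^2 * (((x i):ℂ) - ((y i : ℝ):ℂ))^2) *
          (C * (Complex.exp (Complex.I*(k₀:ℂ)*((∑ j, (x j - y j)^2 : ℝ):ℂ)/(2*(z:ℂ))) * f y)) :=
      fun i => by ring
    simp_rw [h1]
    rw [← Finset.sum_mul, Finset.sum_add_distrib, Finset.sum_const, Finset.card_univ,
      Fintype.card_fin, ← Finset.mul_sum, ← hcast, nsmul_eq_mul]
    ring
  rw [hzero, integral_zero]
end

section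
/- Fix d ∈ ℕ with d ≥ 1 and k₀ > 0, and let f : ℝ^d → ℂ be a Schwartz function. For z > 0 define E(x, z) = ∫_{ℝ^d} (k₀ / (2 i π z))^{d/2} · exp( i k₀ |x − y|² / (2 z) ) · f(y) dy, where the complex power is taken with the principal branch. Then for every x ∈ ℝ^d, E(x, z) converges to f(x) as z → 0⁺. -/
open MeasureTheory Complex Filter SchwartzMap
open scoped Real BigOperators Topology
open scoped FourierTransform RealInnerProductSpace

section auxsection
variable {d : ℕ}
local notation "𝕍" => EuclideanSpace ℝ (Fin d)

lemma fresnel_mul_formula {b : ℂ} (hb : 0 < b.re) (X : 𝕍) (G : SchwartzMap 𝕍 ℂ) :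
    ((π : ℂ) / b) ^ ((Module.finrank ℝ 𝕍 : ℂ) / 2) *
        ∫ ξ : 𝕍, Complex.exp (-(π:ℂ) ^ 2 * (‖X - ξ‖ : ℂ) ^ 2 / b) * G ξ
      = ∫ v : 𝕍, Complex.exp (-b * (‖v‖:ℂ) ^ 2 + 2 * π * Complex.I * (⟪X, v⟫ : ℂ)) *
          𝓕 (G : 𝕍 → ℂ) v := by
  set g : 𝕍 → ℂ := fun v ↦ Complex.exp (-b * (‖v‖:ℂ)^2 + 2*π*Complex.I*(⟪X, v⟫:ℂ)) with hg
  have J : Integrable g := by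
    have := GaussianFourier.integrable_cexp_neg_mul_sq_norm_add
      (V := EuclideanSpace ℝ (Fin d)) hb (2*π*Complex.I) X
    simpa [hg, neg_mul, mul_assoc] using this
  have key := VectorFourier.integral_fourierIntegral_smul_eq_flip
    (L := innerₗ (EuclideanSpace ℝ (Fin d)))
    Real.continuous_fourierChar continuous_inner J (G.integrable (μ := volume))
  have key2 : ∫ ξ : 𝕍, (𝓕 g) ξ * G ξ = ∫ v : 𝕍, g v * 𝓕 (⇑G) v := by
    have h := key; simp at h; exact h
  have hFT : ∀ ξ : 𝕍, (𝓕 g) ξ = ((π : ℂ) / b) ^ ((Module.finrank ℝ 𝕍 : ℂ) / 2) *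
      Complex.exp (-(π:ℂ) ^ 2 * (‖X - ξ‖ : ℂ) ^ 2 / b) := by
    intro ξ
    have := fourier_gaussian_innerProductSpace'
      (V := EuclideanSpace ℝ (Fin d)) hb X ξ
    rw [hg]
    convert this using 3
  rw [← integral_const_mul, ← key2]
  congr 1
  ext ξ
  rw [hFT ξ, mul_assoc]

lemma fresnel_re_nonneg_bound {b : ℂ} (hb : 0 ≤ b.re) (s : ℝ) :
    ‖Complex.exp (-(π:ℂ) ^ 2 * (s:ℂ) ^ 2 / b)‖ ≤ 1 := by
  rw [Complex.norm_exp, Real.exp_le_one_iff]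
  have : -(π:ℂ) ^ 2 * (s:ℂ) ^ 2 / b = ((-(π^2) * s^2 : ℝ) : ℂ) * b⁻¹ := by
    push_cast; ring
  rw [this, Complex.re_ofReal_mul, Complex.inv_re]
  have h1 : 0 ≤ b.re / Complex.normSq b := div_nonneg hb (Complex.normSq_nonneg b)
  nlinarith [sq_nonneg s, sq_nonneg π, mul_nonneg (mul_nonneg (sq_nonneg π) (sq_nonneg s)) h1]

lemma fresnel_gauss_bound {b : ℂ} (hb : 0 ≤ b.re) (X v : 𝕍) :
    ‖Complex.exp (-b * (‖v‖:ℂ) ^ 2 + 2 * π * Complex.I * (⟪X, v⟫ : ℂ))‖ ≤ 1 := by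
  rw [Complex.norm_exp, Real.exp_le_one_iff]
  have h2 : (2 * (π:ℂ) * Complex.I * (⟪X, v⟫ : ℂ)).re = 0 := by
    simp [Complex.mul_re, Complex.mul_im]
  have h1 : (-b * (‖v‖:ℂ) ^ 2).re = -b.re * ‖v‖^2 := by
    have : -b * (‖v‖:ℂ)^2 = ((‖v‖^2 : ℝ) : ℂ) * (-b) := by push_cast; ring
    rw [this, Complex.re_ofReal_mul]
    simp [mul_comm]
  rw [Complex.add_re, h1, h2]
  nlinarith [sq_nonneg ‖v‖, mul_nonneg hb (sq_nonneg ‖v‖)]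

lemma fresnel_imag_formula {t : ℝ} (ht : 0 < t) (X : 𝕍) (G : SchwartzMap 𝕍 ℂ) :
    ((π : ℂ) / (Complex.I * t)) ^ ((Module.finrank ℝ 𝕍 : ℂ) / 2) *
        ∫ ξ : 𝕍, Complex.exp (-(π:ℂ) ^ 2 * (‖X - ξ‖ : ℂ) ^ 2 / (Complex.I * t)) * G ξ
      = ∫ v : 𝕍, Complex.exp (-(Complex.I * t) * (‖v‖:ℂ) ^ 2
          + 2 * π * Complex.I * (⟪X, v⟫ : ℂ)) * 𝓕 (G : 𝕍 → ℂ) v := by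
  have hne : ∀ ε : ℝ, 0 ≤ ε → ((ε : ℂ) + Complex.I * t) ≠ 0 := by
    intro ε hε h
    have := congrArg Complex.im h
    simp at this
    exact ht.ne' this
  -- LHS limit
  have hlim1 : Tendsto (fun ε : ℝ =>
      ((π : ℂ) / ((ε:ℂ) + Complex.I * t)) ^ ((Module.finrank ℝ 𝕍 : ℂ) / 2) *
        ∫ ξ : 𝕍, Complex.exp (-(π:ℂ)^2 * (‖X - ξ‖:ℂ)^2 / ((ε:ℂ) + Complex.I * t)) * G ξ)
      (𝓝[>] (0:ℝ))
      (𝓝 (((π : ℂ) / (Complex.I * t)) ^ ((Module.finrank ℝ 𝕍 : ℂ) / 2) *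
        ∫ ξ : 𝕍, Complex.exp (-(π:ℂ)^2 * (‖X - ξ‖:ℂ)^2 / (Complex.I * t)) * G ξ)) := by
    apply Tendsto.mul
    · have hc : ContinuousAt (fun ε : ℝ => ((π : ℂ) / ((ε:ℂ) + Complex.I * t))
          ^ ((Module.finrank ℝ 𝕍 : ℂ) / 2)) 0 := by
        apply ContinuousAt.cpow
        · apply ContinuousAt.div continuousAt_const
          · fun_prop
          · simpa using hne 0 le_rfl
        · exact continuousAt_const
        · right
          simp only [Complex.ofReal_zero, zero_add]
          have hIt : (Complex.I * (t:ℂ)) ≠ 0 := by simpa using hne 0 le_rfl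
          have h : (π:ℂ)/(Complex.I * t) = ((-(π/t):ℝ):ℂ) * Complex.I := by
            rw [div_eq_iff hIt]
            push_cast
            have : Complex.I * Complex.I = -1 := Complex.I_mul_I
            field_simp [ht.ne']
            rw [Complex.I_sq]
            ring
          rw [h]
          simp [Complex.mul_im, Real.pi_ne_zero, ht.ne']
      simpa using hc.tendsto.mono_left nhdsWithin_le_nhds
    · apply tendsto_integral_filter_of_dominated_convergence (fun ξ : 𝕍 => ‖G ξ‖)
      · filter_upwards with ε
        exact (Continuous.aestronglyMeasurable (by fun_prop)).mul
          G.continuous.aestronglyMeasurable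
      · filter_upwards [self_mem_nhdsWithin] with ε (hε : 0 < ε)
        filter_upwards with ξ
        rw [norm_mul]
        calc ‖Complex.exp (-(π:ℂ)^2 * (‖X - ξ‖:ℂ)^2 / ((ε:ℂ) + Complex.I * t))‖ * ‖G ξ‖
            ≤ 1 * ‖G ξ‖ := by
              apply mul_le_mul_of_nonneg_right _ (norm_nonneg _)
              apply fresnel_re_nonneg_bound
              simp [hε.le]
          _ = ‖G ξ‖ := one_mul _
      · exact G.integrable.norm
      · filter_upwards with ξ
        apply Tendsto.mono_left _ nhdsWithin_le_nhds
        apply Tendsto.mul _ tendsto_const_nhds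
        apply (Complex.continuous_exp.tendsto _).comp
        have : ContinuousAt (fun ε : ℝ =>
            -(π:ℂ)^2 * (‖X - ξ‖:ℂ)^2 / ((ε:ℂ) + Complex.I * t)) 0 := by
          apply ContinuousAt.div (by fun_prop) (by fun_prop)
          simpa using hne 0 le_rfl
        simpa using this.tendsto
  -- RHS limit
  have hlim2 : Tendsto (fun ε : ℝ =>
      ∫ v : 𝕍, Complex.exp (-((ε:ℂ) + Complex.I * t) * (‖v‖:ℂ)^2
          + 2 * π * Complex.I * (⟪X, v⟫ : ℂ)) * 𝓕 (G : 𝕍 → ℂ) v)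
      (𝓝[>] (0:ℝ))
      (𝓝 (∫ v : 𝕍, Complex.exp (-(Complex.I * t) * (‖v‖:ℂ)^2
          + 2 * π * Complex.I * (⟪X, v⟫ : ℂ)) * 𝓕 (G : 𝕍 → ℂ) v)) := by
    have hFTint : Integrable (𝓕 (G : 𝕍 → ℂ)) := by
      have := (SchwartzMap.fourierTransformCLM ℝ (V := EuclideanSpace ℝ (Fin d)) G).integrable
        (μ := volume)
      simpa [SchwartzMap.fourier_coe] using this
    have hFTcont : Continuous (𝓕 (G : 𝕍 → ℂ)) := by
      have := (SchwartzMap.fourierTransformCLM ℝ (V := EuclideanSpace ℝ (Fin d)) G).continuous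
      simpa [SchwartzMap.fourier_coe] using this
    apply tendsto_integral_filter_of_dominated_convergence (fun v : 𝕍 => ‖𝓕 (G : 𝕍 → ℂ) v‖)
    · filter_upwards with ε
      have hcont : Continuous (fun v : 𝕍 => Complex.exp (-((ε:ℂ) + Complex.I * t) * (‖v‖:ℂ)^2
          + 2 * π * Complex.I * (⟪X, v⟫ : ℂ))) := by
        apply Complex.continuous_exp.comp
        exact (continuous_const.mul ((Complex.continuous_ofReal.comp continuous_norm).pow 2)).add
          (continuous_const.mul (Complex.continuous_ofReal.comp
            (continuous_const.inner continuous_id)))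
      exact hcont.aestronglyMeasurable.mul hFTcont.aestronglyMeasurable
    · filter_upwards [self_mem_nhdsWithin] with ε (hε : 0 < ε)
      filter_upwards with v
      rw [norm_mul]
      calc ‖Complex.exp (-((ε:ℂ) + Complex.I * t) * (‖v‖:ℂ)^2
              + 2 * π * Complex.I * (⟪X, v⟫ : ℂ))‖ * ‖𝓕 (G : 𝕍 → ℂ) v‖
          ≤ 1 * ‖𝓕 (G : 𝕍 → ℂ) v‖ := by
            apply mul_le_mul_of_nonneg_right _ (norm_nonneg _)
            apply fresnel_gauss_bound
            simp [hε.le]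
        _ = _ := one_mul _
    · exact hFTint.norm
    · filter_upwards with v
      apply Tendsto.mono_left _ nhdsWithin_le_nhds
      apply Tendsto.mul _ tendsto_const_nhds
      apply (Complex.continuous_exp.tendsto _).comp
      have : ContinuousAt (fun ε : ℝ => -((ε:ℂ) + Complex.I * t) * (‖v‖:ℂ)^2
          + 2 * π * Complex.I * (⟪X, v⟫ : ℂ)) 0 := by
        exact (((Complex.continuous_ofReal.continuousAt).add continuousAt_const).neg.mul
          continuousAt_const).add continuousAt_const
      simpa using this.tendsto
  refine tendsto_nhds_unique (hlim1.congr' ?_) hlim2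
  filter_upwards [self_mem_nhdsWithin] with ε (hε : 0 < ε)
  exact fresnel_mul_formula (by simpa using hε) X G


lemma fresnel_tendsto_zero (k₀ : ℝ) (hk : 0 < k₀) (X : 𝕍) (G : SchwartzMap 𝕍 ℂ) :
    Tendsto (fun z : ℝ => ∫ v : 𝕍,
        Complex.exp (-(Complex.I * ((2*π^2*z/k₀ : ℝ):ℂ)) * (‖v‖:ℂ)^2
          + 2 * π * Complex.I * (⟪X, v⟫ : ℂ)) * 𝓕 (G : 𝕍 → ℂ) v)
      (𝓝[>] (0:ℝ)) (𝓝 (G X)) := by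
  have hFTint : Integrable (𝓕 (G : 𝕍 → ℂ)) := by
    have := (SchwartzMap.fourierTransformCLM ℝ (V := EuclideanSpace ℝ (Fin d)) G).integrable
      (μ := volume)
    simpa [SchwartzMap.fourier_coe] using this
  have hFTcont : Continuous (𝓕 (G : 𝕍 → ℂ)) := by
    have := (SchwartzMap.fourierTransformCLM ℝ (V := EuclideanSpace ℝ (Fin d)) G).continuous
    simpa [SchwartzMap.fourier_coe] using this
  have hnorm : ∀ (s : ℝ) (v : 𝕍),
      ‖Complex.exp (-(Complex.I * (s:ℂ)) * (‖v‖:ℂ)^2 + 2 * π * Complex.I * (⟪X, v⟫ : ℂ))‖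
        = 1 := by
    intro s v
    have : -(Complex.I * (s:ℂ)) * (‖v‖:ℂ)^2 + 2 * π * Complex.I * (⟪X, v⟫ : ℂ)
        = Complex.I * (((-(s*‖v‖^2) + 2*π*⟪X,v⟫ : ℝ)) : ℂ) := by
      push_cast; ring
    rw [this, Complex.norm_exp]
    simp [← Complex.ofReal_pow]
  have hid : ∫ v : 𝕍, Complex.exp (2 * π * Complex.I * (⟪X, v⟫ : ℂ)) * 𝓕 (G : 𝕍 → ℂ) v
      = G X := by
    rw [← MeasureTheory.Integrable.fourierInv_fourier_eq G.integrable hFTint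
      (G.continuous.continuousAt)]
    rw [Real.fourierInv_eq']
    congr 1
    ext v
    rw [smul_eq_mul]
    congr 2
    push_cast
    rw [real_inner_comm]
    ring
  rw [← hid]
  apply tendsto_integral_filter_of_dominated_convergence (fun v : 𝕍 => ‖𝓕 (G : 𝕍 → ℂ) v‖)
  · filter_upwards with z
    have hcont : Continuous (fun v : 𝕍 =>
        Complex.exp (-(Complex.I * ((2*π^2*z/k₀ : ℝ):ℂ)) * (‖v‖:ℂ)^2
          + 2 * π * Complex.I * (⟪X, v⟫ : ℂ))) := by
      apply Complex.continuous_exp.comp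
      exact (continuous_const.mul ((Complex.continuous_ofReal.comp continuous_norm).pow 2)).add
        (continuous_const.mul (Complex.continuous_ofReal.comp
          (continuous_const.inner continuous_id)))
    exact hcont.aestronglyMeasurable.mul hFTcont.aestronglyMeasurable
  · filter_upwards with z
    filter_upwards with v
    rw [norm_mul, hnorm, one_mul]
  · exact hFTint.norm
  · filter_upwards with v
    apply Tendsto.mono_left _ nhdsWithin_le_nhds
    have : ContinuousAt (fun z : ℝ =>
        Complex.exp (-(Complex.I * ((2*π^2*z/k₀ : ℝ):ℂ)) * (‖v‖:ℂ)^2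
          + 2 * π * Complex.I * (⟪X, v⟫ : ℂ)) * 𝓕 (G : 𝕍 → ℂ) v) 0 := by
      apply ContinuousAt.mul _ continuousAt_const
      apply (Complex.continuous_exp.continuousAt).comp
      apply ContinuousAt.add _ continuousAt_const
      apply ContinuousAt.mul _ continuousAt_const
      apply ContinuousAt.neg
      exact continuousAt_const.mul (Complex.continuous_ofReal.continuousAt.comp (by fun_prop))
    simpa using this.tendsto

lemma fresnel_transfer (k₀ : ℝ) (hk : 0 < k₀) (f : SchwartzMap ((Fin d) → ℝ) ℂ) (x : Fin d → ℝ)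
    (z : ℝ) (hz : 0 < z) :
    (∫ y : Fin d → ℝ,
        ((k₀ : ℂ) / (2 * Complex.I * (π : ℂ) * (z : ℂ))) ^ ((d : ℂ) / 2) *
          Complex.exp (Complex.I * (k₀ : ℂ) * ((∑ i, (x i - y i) ^ 2 : ℝ) : ℂ) /
            (2 * (z : ℂ))) * f y)
      = ((π:ℂ) / (Complex.I * ((2*π^2*z/k₀ : ℝ):ℂ)))
          ^ ((Module.finrank ℝ (EuclideanSpace ℝ (Fin d)) : ℂ) / 2) *
        ∫ ξ : 𝕍, Complex.exp (-(π:ℂ) ^ 2 *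
            (‖((EuclideanSpace.equiv (Fin d) ℝ).symm x : 𝕍) - ξ‖ : ℂ) ^ 2
            / (Complex.I * ((2*π^2*z/k₀ : ℝ):ℂ)))
          * (SchwartzMap.compCLMOfContinuousLinearEquiv ℝ
              (EuclideanSpace.equiv (Fin d) ℝ) f) ξ := by
  set X : 𝕍 := (EuclideanSpace.equiv (Fin d) ℝ).symm x with hX
  set G := SchwartzMap.compCLMOfContinuousLinearEquiv ℝ (EuclideanSpace.equiv (Fin d) ℝ) f
    with hG
  have ht : (0:ℝ) < 2*π^2*z/k₀ := by positivity
  rw [← MeasurePreserving.integral_comp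
    (EuclideanSpace.volume_preserving_symm_measurableEquiv_toLp (Fin d))
    (MeasurableEquiv.measurableEmbedding _), ← integral_const_mul]
  congr 1
  ext v
  have hv : ∀ i, (MeasurableEquiv.toLp 2 (Fin d → ℝ)).symm v i = v i := fun i => rfl
  have hXi : ∀ i, X i = x i := fun i => rfl
  have hsum : (∑ i, (x i - (MeasurableEquiv.toLp 2 (Fin d → ℝ)).symm v i) ^ 2 : ℝ)
      = ‖X - v‖^2 := by
    rw [EuclideanSpace.norm_eq, Real.sq_sqrt (by positivity)]
    congr 1
    ext i
    rw [hv i]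
    simp [hXi i, sq_abs, PiLp.sub_apply]
  have hfv : f ((MeasurableEquiv.toLp 2 (Fin d → ℝ)).symm v) = G v := rfl
  rw [hsum, hfv, mul_assoc, mul_assoc]
  congr 1
  · -- constant base and exponent
    rw [finrank_euclideanSpace, Fintype.card_fin]
    congr 1
    have hz' : (z:ℂ) ≠ 0 := by exact_mod_cast ne_of_gt hz
    have hk' : (k₀:ℂ) ≠ 0 := by exact_mod_cast ne_of_gt hk
    have hπ : (π:ℂ) ≠ 0 := by exact_mod_cast Real.pi_ne_zero
    have hden : (Complex.I * (2 * (π:ℂ)^2 * (z:ℂ))) ≠ 0 :=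
      mul_ne_zero Complex.I_ne_zero
        (mul_ne_zero (mul_ne_zero two_ne_zero (pow_ne_zero 2 hπ)) hz')
    push_cast
    field_simp
  congr 1
  -- exponent equality
  have hz' : (z:ℂ) ≠ 0 := by exact_mod_cast ne_of_gt hz
  have hk' : (k₀:ℂ) ≠ 0 := by exact_mod_cast ne_of_gt hk
  have hπ : (π:ℂ) ≠ 0 := by exact_mod_cast Real.pi_ne_zero
  congr 1
  have hden : (Complex.I * (2 * (π:ℂ)^2 * (z:ℂ))) ≠ 0 :=
    mul_ne_zero Complex.I_ne_zero
      (mul_ne_zero (mul_ne_zero two_ne_zero (pow_ne_zero 2 hπ)) hz')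
  push_cast
  field_simp
  ring_nf
  rw [show Complex.I^2 = -1 from Complex.I_sq]
  ring

end auxsection

/-- The Fresnel-type oscillatory kernel acts as an approximate identity as `z → 0⁺`:
for a Schwartz initial field `f`, the propagated field
`E(x,z) = ∫ (k₀/(2iπz))^{d/2} exp(i k₀ |x−y|²/(2z)) f(y) dy`
converges to `f(x)` as `z → 0⁺`. -/
theorem paraxial_propagated_field_initial_condition
    (d : ℕ) (hd : 1 ≤ d) (k₀ : ℝ) (hk : 0 < k₀)
    (f : SchwartzMap ((Fin d) → ℝ) ℂ)
    (E : ((Fin d) → ℝ) → ℝ → ℂ)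
    (hE : ∀ (x : Fin d → ℝ) (z : ℝ), E x z =
      ∫ y : Fin d → ℝ,
        ((k₀ : ℂ) / (2 * Complex.I * (π : ℂ) * (z : ℂ))) ^ ((d : ℂ) / 2) *
          Complex.exp (Complex.I * (k₀ : ℂ) * ((∑ i, (x i - y i) ^ 2 : ℝ) : ℂ) /
            (2 * (z : ℂ))) * f y) :
    ∀ x : Fin d → ℝ,
      Tendsto (fun z : ℝ => E x z) (𝓝[>] (0 : ℝ)) (𝓝 (f x)) := by
  intro x
  set X : EuclideanSpace ℝ (Fin d) := (EuclideanSpace.equiv (Fin d) ℝ).symm x with hX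
  set G := SchwartzMap.compCLMOfContinuousLinearEquiv ℝ (EuclideanSpace.equiv (Fin d) ℝ) f
    with hG
  have hGX : G X = f x := by
    simp [hG, hX]
    rfl
  have hrep : (fun z : ℝ => E x z) =ᶠ[𝓝[>] (0:ℝ)]
      (fun z : ℝ => ∫ v : EuclideanSpace ℝ (Fin d),
        Complex.exp (-(Complex.I * ((2*π^2*z/k₀ : ℝ):ℂ)) * ((‖v‖ : ℝ):ℂ)^2
          + 2 * π * Complex.I * ((⟪X, v⟫ : ℝ) : ℂ)) * 𝓕 (⇑G) v) := by
    filter_upwards [self_mem_nhdsWithin] with z (hz : 0 < z)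
    rw [hE x z, fresnel_transfer k₀ hk f x z hz]
    exact fresnel_imag_formula (by positivity) X G
  have hfin := fresnel_tendsto_zero k₀ hk X G
  rw [hGX] at hfin
  exact hfin.congr' hrep.symm
end

section
/- Fix d ∈ ℕ with d ≥ 1, k₀ > 0, and γ̄₂ > 0. For ξ, ζ ∈ ℝ^d and z > 0 define ψ(ξ, ζ, z) = (2 π k₀² γ̄₂ z)^{−d/2} · exp( − (γ̄₂ z³ / 24) |ζ|² − i (z / (2 k₀)) ξ·ζ − |ξ|² / (2 k₀² γ̄₂ z) ). Then for every ξ, ζ ∈ ℝ^d and z > 0, ψ satisfies the complex advection–diffusion equation ∂ψ/∂z (ξ, ζ, z) + (i / k₀) (ξ·ζ) ψ(ξ, ζ, z) = (k₀² γ̄₂ / 2) Δ_ξ ψ(ξ, ζ, z), where Δ_ξ denotes the Laplacian with respect to ξ. -/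
open Complex

private lemma hasDerivAt_ofReal' (x : ℝ) : HasDerivAt (fun t : ℝ => (t : ℂ)) 1 x := by
  simpa using (hasDerivAt_id x).ofReal_comp

private lemma sq_hasDerivAt' (t : ℝ) : HasDerivAt (fun t : ℝ => (t:ℂ) ^ 2) (2 * (t:ℂ)) t := by
  have h1 := hasDerivAt_ofReal' t
  have := h1.mul h1
  simpa [sq, two_mul, Pi.mul_def] using this

private lemma quadExp_hasDerivAt (C K β δ : ℂ) (t : ℝ) :
    HasDerivAt (fun t : ℝ => C * Complex.exp (K + β * t + δ * (t:ℂ) ^ 2))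
      (C * Complex.exp (K + β * t + δ * (t:ℂ) ^ 2) * (β + 2 * δ * t)) t := by
  have h1 := hasDerivAt_ofReal' t
  have hb : HasDerivAt (fun t : ℝ => β * (t:ℂ)) β t := by simpa using h1.const_mul β
  have hq : HasDerivAt (fun t : ℝ => δ * (t:ℂ) ^ 2) (δ * (2 * (t:ℂ))) t :=
    (sq_hasDerivAt' t).const_mul δ
  have hE : HasDerivAt (fun t : ℝ => K + β * (t:ℂ) + δ * (t:ℂ) ^ 2) (β + 2 * δ * t) t := by
    have := ((hasDerivAt_const t K).add hb).add hq
    simp only [Pi.add_def] at this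
    convert this using 1
    · rfl
    ring
  have := (hE.cexp).const_mul C
  convert this using 1
  · rfl
  ring

private lemma quadExp_iteratedDeriv2 (C K β δ : ℂ) (x : ℝ) :
    iteratedDeriv 2 (fun t : ℝ => C * Complex.exp (K + β * t + δ * (t:ℂ) ^ 2)) x
      = C * Complex.exp (K + β * x + δ * (x:ℂ) ^ 2) * ((β + 2 * δ * x) ^ 2 + 2 * δ) := by
  rw [show (2:ℕ) = 1 + 1 from rfl, iteratedDeriv_succ, iteratedDeriv_one]
  have hd1 : (deriv fun t : ℝ => C * Complex.exp (K + β * t + δ * (t:ℂ) ^ 2))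
      = fun t : ℝ => C * Complex.exp (K + β * t + δ * (t:ℂ) ^ 2) * (β + 2 * δ * t) := by
    funext t; exact (quadExp_hasDerivAt C K β δ t).deriv
  rw [hd1]
  have h1 := hasDerivAt_ofReal' x
  have hlin : HasDerivAt (fun t : ℝ => β + 2 * δ * (t:ℂ)) (2 * δ) x := by
    have hb : HasDerivAt (fun t : ℝ => 2 * δ * (t:ℂ)) (2 * δ) x := by
      simpa using h1.const_mul (2 * δ)
    simpa [Pi.add_def] using (hasDerivAt_const x β).add hb
  have := (quadExp_hasDerivAt C K β δ x).mul hlin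
  simp only [Pi.mul_def] at this
  rw [this.deriv]
  ring

private lemma zExp_hasDerivAt (c p : ℝ) (a b e : ℂ) (z : ℝ) (hc : 0 < c) (hz : 0 < z) :
    HasDerivAt (fun s : ℝ => (((c * s) ^ p : ℝ) : ℂ) *
        Complex.exp (a * (s:ℂ) ^ 3 + b * s + e * (s:ℂ)⁻¹))
      ((((c * z) ^ p : ℝ) : ℂ) * Complex.exp (a * (z:ℂ) ^ 3 + b * z + e * (z:ℂ)⁻¹) *
        ((p:ℂ) / z + 3 * a * (z:ℂ) ^ 2 + b - e / (z:ℂ) ^ 2)) z := by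
  have hcz : 0 < c * z := mul_pos hc hz
  have h1 := hasDerivAt_ofReal' z
  -- real power part
  have hR : HasDerivAt (fun s : ℝ => (c * s) ^ p) (p * (c * z) ^ p / z) z := by
    have hlin : HasDerivAt (fun s : ℝ => c * s) c z := by
      simpa using (hasDerivAt_id z).const_mul c
    have h := (Real.hasDerivAt_rpow_const (x := c * z) (p := p) (Or.inl hcz.ne')).comp z hlin
    have : p * (c * z) ^ (p - 1) * c = p * (c * z) ^ p / z := by
      rw [Real.rpow_sub_one hcz.ne']
      field_simp
    rw [this] at h
    exact h
  have hRC : HasDerivAt (fun s : ℝ => (((c * s) ^ p : ℝ) : ℂ)) ((p * (c * z) ^ p / z : ℝ) : ℂ) z :=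
    hR.ofReal_comp
  -- exponent part
  have hcube : HasDerivAt (fun s : ℝ => (s:ℂ) ^ 3) (3 * (z:ℂ) ^ 2) z := by
    have := (sq_hasDerivAt' z).mul h1
    simp only [Pi.mul_def] at this
    have heq : (fun s : ℝ => (s:ℂ) ^ 2 * (s:ℂ)) = fun s : ℝ => (s:ℂ) ^ 3 := by
      funext s; ring
    rw [heq] at this
    convert this using 1
    · rfl
    ring
  have hinv : HasDerivAt (fun s : ℝ => ((s:ℂ))⁻¹) (-1 / (z:ℂ) ^ 2) z := by
    have h := (hasDerivAt_inv hz.ne').ofReal_comp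
    have heq : (fun s : ℝ => ((s⁻¹ : ℝ) : ℂ)) = fun s : ℝ => ((s:ℂ))⁻¹ := by
      funext s; push_cast; ring
    rw [heq] at h
    convert h using 1
    push_cast
    field_simp
  have hE : HasDerivAt (fun s : ℝ => a * (s:ℂ) ^ 3 + b * s + e * (s:ℂ)⁻¹)
      (3 * a * (z:ℂ) ^ 2 + b - e / (z:ℂ) ^ 2) z := by
    have := ((hcube.const_mul a).add (h1.const_mul b)).add (hinv.const_mul e)
    simp only [Pi.add_def] at this
    convert this using 1
    · rfl
    ring
  have := hRC.mul hE.cexp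
  simp only [Pi.mul_def] at this
  convert this using 1
  · rfl
  push_cast
  have hz' : (z:ℂ) ≠ 0 := by exact_mod_cast hz.ne'
  field_simp
  ring
private lemma spot_key (d : ℕ) (k₀ γ₂ z P Z2 X2 : ℝ)
    (hz' : (z:ℂ) ≠ 0) (hk' : (k₀:ℂ) ≠ 0) (hγ' : (γ₂:ℂ) ≠ 0) :
    (((-(d:ℝ)/2 : ℝ):ℂ) / z + 3 * (-((γ₂:ℂ) * (Z2:ℂ)) / 24) * (z:ℂ) ^ 2
        + (-Complex.I * (P:ℂ) / (2 * (k₀:ℂ))) - (-(X2:ℂ) / (2 * (k₀:ℂ) ^ 2 * (γ₂:ℂ))) / (z:ℂ) ^ 2)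
        + Complex.I / (k₀:ℂ) * (P:ℂ)
      = ((k₀ ^ 2 * γ₂ / 2 : ℝ) : ℂ)
        * ((-Complex.I * (z:ℂ) / (2 * (k₀:ℂ))) ^ 2 * (Z2:ℂ)
          + 4 * (-Complex.I * (z:ℂ) / (2 * (k₀:ℂ))) * (-1 / (2 * (k₀:ℂ) ^ 2 * (γ₂:ℂ) * (z:ℂ))) * (P:ℂ)
          + 4 * (-1 / (2 * (k₀:ℂ) ^ 2 * (γ₂:ℂ) * (z:ℂ))) ^ 2 * (X2:ℂ)
          + 2 * (-1 / (2 * (k₀:ℂ) ^ 2 * (γ₂:ℂ) * (z:ℂ))) * (d:ℂ)) := by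
  have hI : Complex.I ^ 2 = -1 := Complex.I_sq
  have hk1 : (k₀:ℂ) * (k₀:ℂ)⁻¹ = 1 := mul_inv_cancel₀ hk'
  have hg1 : (γ₂:ℂ) * (γ₂:ℂ)⁻¹ = 1 := mul_inv_cancel₀ hγ'
  have hz1 : (z:ℂ) * (z:ℂ)⁻¹ = 1 := mul_inv_cancel₀ hz'
  push_cast
  linear_combination
    (-(1/8 : ℂ) * γ₂ * Z2 * (z:ℂ)^2 * ((k₀:ℂ)*(k₀:ℂ)⁻¹)^2) * hI
    + ((1/8 : ℂ)*γ₂*Z2*(z:ℂ)^2*((k₀:ℂ)*(k₀:ℂ)⁻¹+1)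
       - (1/2 : ℂ)*Complex.I*P*(k₀:ℂ)⁻¹*((k₀:ℂ)*(k₀:ℂ)⁻¹+1)*((γ₂:ℂ)*(γ₂:ℂ)⁻¹)*((z:ℂ)*(z:ℂ)⁻¹)
       - (1/2 : ℂ)*X2*(k₀:ℂ)⁻¹^2*(γ₂:ℂ)⁻¹*(z:ℂ)⁻¹^2*((k₀:ℂ)*(k₀:ℂ)⁻¹+1)*((γ₂:ℂ)*(γ₂:ℂ)⁻¹)
       + (1/2 : ℂ)*d*(z:ℂ)⁻¹*((k₀:ℂ)*(k₀:ℂ)⁻¹+1)*((γ₂:ℂ)*(γ₂:ℂ)⁻¹)) * hk1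
    + (-(1/2 : ℂ)*Complex.I*P*(k₀:ℂ)⁻¹*((z:ℂ)*(z:ℂ)⁻¹)
       - (1/2 : ℂ)*X2*(k₀:ℂ)⁻¹^2*(γ₂:ℂ)⁻¹*(z:ℂ)⁻¹^2 + (1/2 : ℂ)*d*(z:ℂ)⁻¹) * hg1
    + (-(1/2 : ℂ)*Complex.I*P*(k₀:ℂ)⁻¹) * hz1

open MeasureTheory Complex
open scoped Real BigOperators

set_option maxHeartbeats 1600000 in
/-- The explicit kernel
`ψ(ξ,ζ,z) = (2πk₀²γ̄₂z)^{−d/2} exp(−(γ̄₂z³/24)|ζ|² − i(z/(2k₀))ξ·ζ − |ξ|²/(2k₀²γ̄₂z))`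
satisfies the complex advection–diffusion equation
`∂ψ/∂z + (i/k₀)(ξ·ζ)ψ = (k₀²γ̄₂/2) Δ_ξ ψ` for `z > 0`. -/
theorem spot_dancing_kernel_solves_equation
    (d : ℕ) (hd : 1 ≤ d) (k₀ : ℝ) (hk : 0 < k₀) (γ₂ : ℝ) (hγ : 0 < γ₂)
    (ψ : (Fin d → ℝ) → (Fin d → ℝ) → ℝ → ℂ)
    (hψ : ∀ (ξ ζ : Fin d → ℝ) (z : ℝ), ψ ξ ζ z =
      (((2 * π * k₀ ^ 2 * γ₂ * z) ^ (-(d : ℝ) / 2) : ℝ) : ℂ) *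
        Complex.exp (
          -(((γ₂ * z ^ 3 / 24) * (∑ i, (ζ i) ^ 2) : ℝ) : ℂ)
          - Complex.I * ((z / (2 * k₀) : ℝ) : ℂ) * ((∑ i, ξ i * ζ i : ℝ) : ℂ)
          - (((∑ i, (ξ i) ^ 2) / (2 * k₀ ^ 2 * γ₂ * z) : ℝ) : ℂ))) :
    ∀ (ξ ζ : Fin d → ℝ) (z : ℝ), 0 < z →
      deriv (fun s : ℝ => ψ ξ ζ s) z
        + (Complex.I / (k₀ : ℂ)) * ((∑ i, ξ i * ζ i : ℝ) : ℂ) * ψ ξ ζ z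
        = ((k₀ ^ 2 * γ₂ / 2 : ℝ) : ℂ) *
            (∑ i, iteratedDeriv 2 (fun t : ℝ => ψ (Function.update ξ i t) ζ z) (ξ i)) := by
  intro ξ ζ z hz
  have hz' : (z:ℂ) ≠ 0 := by exact_mod_cast hz.ne'
  have hk' : (k₀:ℂ) ≠ 0 := by exact_mod_cast hk.ne'
  have hγ' : (γ₂:ℂ) ≠ 0 := by exact_mod_cast hγ.ne'
  set P : ℝ := ∑ i, ξ i * ζ i with hP
  set Z2 : ℝ := ∑ i, (ζ i) ^ 2 with hZ2
  set X2 : ℝ := ∑ i, (ξ i) ^ 2 with hX2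
  set c : ℝ := 2 * π * k₀ ^ 2 * γ₂ with hcdef
  have hc : 0 < c := by positivity
  set p : ℝ := -(d : ℝ) / 2 with hpdef
  set a : ℂ := -((γ₂:ℂ) * (Z2:ℂ)) / 24 with hadef
  set b : ℂ := -Complex.I * (P:ℂ) / (2 * (k₀:ℂ)) with hbdef
  set e : ℂ := -(X2:ℂ) / (2 * (k₀:ℂ) ^ 2 * (γ₂:ℂ)) with hedef
  set μ : ℂ := -Complex.I * (z:ℂ) / (2 * (k₀:ℂ)) with hμdef
  set δ : ℂ := -1 / (2 * (k₀:ℂ) ^ 2 * (γ₂:ℂ) * (z:ℂ)) with hδdef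
  set C : ℂ := (((c * z) ^ p : ℝ) : ℂ) with hCdef
  -- the z-direction
  have hfun : (fun s : ℝ => ψ ξ ζ s) =
      fun s : ℝ => (((c * s) ^ p : ℝ) : ℂ) *
        Complex.exp (a * (s:ℂ) ^ 3 + b * s + e * (s:ℂ)⁻¹) := by
    funext s
    rw [hψ, ← hP, ← hZ2, ← hX2]
    congr 1
    rw [hadef, hbdef, hedef]
    push_cast
    ring
  have hderiv := (zExp_hasDerivAt c p a b e z hc hz).deriv
  rw [hfun, hderiv]
  -- sums over coordinate updates
  have hupd1 : ∀ (i : Fin d) (t : ℝ),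
      (∑ j, Function.update ξ i t j * ζ j) = P - ξ i * ζ i + t * ζ i := by
    intro i t
    have hfe : (fun j => Function.update ξ i t j * ζ j)
        = Function.update (fun j => ξ j * ζ j) i (t * ζ i) := by
      funext j
      rcases eq_or_ne j i with rfl | h
      · simp
      · simp [Function.update_of_ne h]
    rw [hfe, Finset.sum_update_of_mem (Finset.mem_univ i)]
    have := Finset.sum_sdiff (f := fun j => ξ j * ζ j)
      (Finset.singleton_subset_iff.mpr (Finset.mem_univ i))
    simp only [Finset.sum_singleton] at this
    rw [hP]
    linarith
  have hupd2 : ∀ (i : Fin d) (t : ℝ),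
      (∑ j, (Function.update ξ i t j) ^ 2) = X2 - (ξ i) ^ 2 + t ^ 2 := by
    intro i t
    have hfe : (fun j => (Function.update ξ i t j) ^ 2)
        = Function.update (fun j => (ξ j) ^ 2) i (t ^ 2) := by
      funext j
      rcases eq_or_ne j i with rfl | h
      · simp
      · simp [Function.update_of_ne h]
    rw [hfe, Finset.sum_update_of_mem (Finset.mem_univ i)]
    have := Finset.sum_sdiff (f := fun j => (ξ j) ^ 2)
      (Finset.singleton_subset_iff.mpr (Finset.mem_univ i))
    simp only [Finset.sum_singleton] at this
    rw [hX2]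
    linarith
  -- canonical quadratic-exponential form in each ξ i direction
  set K : Fin d → ℂ := fun i =>
    -((γ₂:ℂ) * (z:ℂ) ^ 3 / 24 * (Z2:ℂ))
      - Complex.I * (z:ℂ) / (2 * (k₀:ℂ)) * ((P:ℂ) - (ξ i : ℂ) * (ζ i : ℂ))
      - ((X2:ℂ) - (ξ i : ℂ) ^ 2) / (2 * (k₀:ℂ) ^ 2 * (γ₂:ℂ) * (z:ℂ)) with hKdef
  have hupdfun : ∀ i : Fin d, (fun t : ℝ => ψ (Function.update ξ i t) ζ z)
      = fun t : ℝ => C * Complex.exp (K i + μ * (ζ i : ℂ) * t + δ * (t:ℂ) ^ 2) := by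
    intro i
    funext t
    rw [hψ, hupd1 i t, hupd2 i t, ← hZ2]
    congr 1
    rw [hKdef, hμdef, hδdef]
    push_cast
    ring
  have hsummand : ∀ i : Fin d,
      iteratedDeriv 2 (fun t : ℝ => ψ (Function.update ξ i t) ζ z) (ξ i)
        = ψ ξ ζ z * ((μ * (ζ i : ℂ) + 2 * δ * (ξ i : ℂ)) ^ 2 + 2 * δ) := by
    intro i
    rw [hupdfun i, quadExp_iteratedDeriv2]
    have hW : C * Complex.exp (K i + μ * (ζ i : ℂ) * (ξ i) + δ * ((ξ i : ℝ):ℂ) ^ 2)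
        = ψ ξ ζ z := by
      rw [hψ, ← hP, ← hZ2, ← hX2]
      congr 1
      rw [hKdef, hμdef, hδdef]
      push_cast
      ring
    rw [hW]
  rw [Finset.sum_congr rfl (fun i _ => hsummand i)]
  -- collapse the sum
  have hsum : (∑ i, ψ ξ ζ z * ((μ * (ζ i : ℂ) + 2 * δ * (ξ i : ℂ)) ^ 2 + 2 * δ))
      = ψ ξ ζ z * (μ ^ 2 * (Z2:ℂ) + 4 * μ * δ * (P:ℂ) + 4 * δ ^ 2 * (X2:ℂ) + 2 * δ * (d:ℂ)) := by
    have hterm : ∀ i : Fin d, ψ ξ ζ z * ((μ * (ζ i : ℂ) + 2 * δ * (ξ i : ℂ)) ^ 2 + 2 * δ)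
        = ψ ξ ζ z * μ ^ 2 * ((ζ i : ℂ)) ^ 2
          + ψ ξ ζ z * (4 * μ * δ) * ((ξ i : ℂ) * (ζ i : ℂ))
          + ψ ξ ζ z * (4 * δ ^ 2) * ((ξ i : ℂ)) ^ 2
          + ψ ξ ζ z * (2 * δ) := by
      intro i; ring
    rw [Finset.sum_congr rfl (fun i _ => hterm i)]
    rw [Finset.sum_add_distrib, Finset.sum_add_distrib, Finset.sum_add_distrib,
      ← Finset.mul_sum, ← Finset.mul_sum, ← Finset.mul_sum,
      Finset.sum_const, Finset.card_univ, Fintype.card_fin, nsmul_eq_mul]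
    rw [hP, hZ2, hX2]
    push_cast
    ring
  rw [hsum]
  -- identify the kernel value
  have hWz : C * Complex.exp (a * (z:ℂ) ^ 3 + b * z + e * ((z:ℝ):ℂ)⁻¹) = ψ ξ ζ z := by
    rw [hψ, ← hP, ← hZ2, ← hX2]
    congr 1
    rw [hadef, hbdef, hedef]
    push_cast
    ring
  rw [hWz]
  -- final scalar identity
  have hkey : ((p:ℂ) / z + 3 * a * (z:ℂ) ^ 2 + b - e / (z:ℂ) ^ 2) + Complex.I / (k₀:ℂ) * (P:ℂ)
      = ((k₀ ^ 2 * γ₂ / 2 : ℝ) : ℂ)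
        * (μ ^ 2 * (Z2:ℂ) + 4 * μ * δ * (P:ℂ) + 4 * δ ^ 2 * (X2:ℂ) + 2 * δ * (d:ℂ)) := by
    rw [hadef, hbdef, hedef, hμdef, hδdef, hpdef]
    exact spot_key d k₀ γ₂ z P Z2 X2 hz' hk' hγ'
  calc ψ ξ ζ z * ((p:ℂ) / z + 3 * a * (z:ℂ) ^ 2 + b - e / (z:ℂ) ^ 2)
        + Complex.I / (k₀:ℂ) * (P:ℂ) * ψ ξ ζ z
      = ψ ξ ζ z * (((p:ℂ) / z + 3 * a * (z:ℂ) ^ 2 + b - e / (z:ℂ) ^ 2)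
          + Complex.I / (k₀:ℂ) * (P:ℂ)) := by ring
    _ = ψ ξ ζ z * (((k₀ ^ 2 * γ₂ / 2 : ℝ) : ℂ)
          * (μ ^ 2 * (Z2:ℂ) + 4 * μ * δ * (P:ℂ) + 4 * δ ^ 2 * (X2:ℂ) + 2 * δ * (d:ℂ))) := by
        rw [hkey]
    _ = ((k₀ ^ 2 * γ₂ / 2 : ℝ) : ℂ)
          * (ψ ξ ζ z * (μ ^ 2 * (Z2:ℂ) + 4 * μ * δ * (P:ℂ) + 4 * δ ^ 2 * (X2:ℂ) + 2 * δ * (d:ℂ))) := by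
        ring
end
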